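/- If λ_m is the largest eigenvalue of the symmetrically normalized Laplacian L_s = D^{-1/2}(D - A)D^{-1/2} of a positively weighted undirected graph, then the largest eigenvalue of the renormalized Laplacian L̃_s = (D+I)^{-1/2}((D+I) - (A+I))(D+I)^{-1/2} is at most (d_m/(d_m+1))·λ_m, where d_m is the maximum vertex degree. -/

import Mathlib

open Matrix BigOperators

/-- `D^{-1/2}` for the diagonal of a positive vector `d`. -/
noncomputable def invSqrtDiag {ι : Type*} [Fintype ι] [DecidableEq ι] (d : ι → ℝ) :
    Matrix ι ι ℝ :=
  Matrix.diagonal fun i => (Real.sqrt (d i))⁻¹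

/-- `μ` is an eigenvalue of the real matrix `M`. -/
def IsEigenvalue {ι : Type*} [Fintype ι] (M : Matrix ι ι ℝ) (μ : ℝ) : Prop :=
  ∃ v : ι → ℝ, v ≠ 0 ∧ M.mulVec v = μ • v

/-- Rayleigh-quotient bound: if all eigenvalues of a real Hermitian matrix are at most `c`,
then the quadratic form is bounded by `c` times the squared norm. -/
lemma rayleigh_bound {m : ℕ} {M : Matrix (Fin m) (Fin m) ℝ} (hM : M.IsHermitian)
    (c : ℝ) (hc : ∀ ν, IsEigenvalue M ν → ν ≤ c) (x : Fin m → ℝ) :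
    x ⬝ᵥ M *ᵥ x ≤ c * (x ⬝ᵥ x) := by
  classical
  set N : Matrix (Fin m) (Fin m) ℝ := c • (1 : Matrix (Fin m) (Fin m) ℝ) - M with hN
  have hNh : N.IsHermitian := by
    have h1 : (c • (1 : Matrix (Fin m) (Fin m) ℝ)).IsHermitian := by
      simp [Matrix.IsHermitian, Matrix.conjTranspose_smul]
    exact h1.sub hM
  have hNmul : ∀ v : Fin m → ℝ, N *ᵥ v = c • v - M *ᵥ v := by
    intro v
    simp [hN, Matrix.sub_mulVec, Matrix.smul_mulVec]
  have hpsd : N.PosSemidef := by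
    refine hNh.posSemidef_iff_eigenvalues_nonneg.mpr fun i => show (0:ℝ) ≤ hNh.eigenvalues i from ?_
    set v : Fin m → ℝ := ⇑(hNh.eigenvectorBasis i) with hv
    have hvne : v ≠ 0 := by
      intro h
      exact hNh.eigenvectorBasis.orthonormal.ne_zero i (by ext k; exact congrFun h k)
    have hev : N *ᵥ v = hNh.eigenvalues i • v := hNh.mulVec_eigenvectorBasis i
    have hMev : M *ᵥ v = (c - hNh.eigenvalues i) • v := by
      have := hNmul v
      rw [hev] at this
      rw [sub_smul, this]; abel
    have := hc _ ⟨v, hvne, hMev⟩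
    linarith
  have h0 := hpsd.dotProduct_mulVec_nonneg x
  have hsx : star x = x := by simp
  rw [hsx, hNmul x, dotProduct_sub, dotProduct_smul] at h0
  simp only [smul_eq_mul] at h0
  linarith

/-- Quadratic form of a weighted Laplacian. -/
lemma lap_quadform {m : ℕ} (A : Matrix (Fin m) (Fin m) ℝ) (hAsymm : A.IsSymm)
    (d : Fin m → ℝ) (hd : ∀ i, d i = ∑ j, A i j) (y : Fin m → ℝ) :
    y ⬝ᵥ (Matrix.diagonal d - A) *ᵥ y = (∑ i, ∑ j, A i j * (y i - y j) ^ 2) / 2 := by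
  have hsym : ∀ i j, A j i = A i j := fun i j => by
    conv_lhs => rw [← hAsymm]
    rfl
  have hL : y ⬝ᵥ (Matrix.diagonal d - A) *ᵥ y
      = ∑ i, ∑ j, (A i j * y i ^ 2 - A i j * (y i * y j)) := by
    rw [Matrix.sub_mulVec, dotProduct_sub]
    simp only [dotProduct, Matrix.mulVec, Matrix.diagonal_apply, ite_mul, zero_mul,
      Finset.sum_ite_eq, Finset.mem_univ, if_true]
    rw [← Finset.sum_sub_distrib]
    refine Finset.sum_congr rfl fun i _ => ?_
    rw [hd i, Finset.sum_mul, Finset.mul_sum, Finset.mul_sum, ← Finset.sum_sub_distrib]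
    exact Finset.sum_congr rfl fun j _ => by ring
  have h12 : ∑ i, ∑ j, A i j * y j ^ 2 = ∑ i, ∑ j, A i j * y i ^ 2 := by
    rw [Finset.sum_comm]
    exact Finset.sum_congr rfl fun i _ => Finset.sum_congr rfl fun j _ => by rw [hsym]
  have hsq : ∑ i, ∑ j, A i j * (y i - y j) ^ 2
      = ∑ i, ∑ j, A i j * y i ^ 2 + ∑ i, ∑ j, A i j * y j ^ 2
        - 2 * ∑ i, ∑ j, A i j * (y i * y j) := by
    rw [Finset.mul_sum, ← Finset.sum_add_distrib, ← Finset.sum_sub_distrib]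
    refine Finset.sum_congr rfl fun i _ => ?_
    rw [Finset.mul_sum, ← Finset.sum_add_distrib, ← Finset.sum_sub_distrib]
    exact Finset.sum_congr rfl fun j _ => by ring
  simp_rw [Finset.sum_sub_distrib] at hL
  rw [hL, hsq, h12]
  ring

/-- If `λm` is the largest eigenvalue of the symmetrically normalized Laplacian
`L_s = D^{-1/2}(D-A)D^{-1/2}` of a positively weighted undirected graph, then every
eigenvalue of the renormalized Laplacian `(D+I)^{-1/2}((D+I)-(A+I))(D+I)^{-1/2}` is
at most `(d_m/(d_m+1)) * λm`. -/
theorem renormalized_laplacian_eigenvalue_bound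
    {n : ℕ} (hn : 0 < n) (A : Matrix (Fin n) (Fin n) ℝ)
    (hAsymm : A.IsSymm) (hAnonneg : ∀ i j, 0 ≤ A i j)
    (d : Fin n → ℝ) (hd : ∀ i, d i = ∑ j, A i j) (hdpos : ∀ i, 0 < d i)
    (dm : ℝ) (hdm : IsGreatest (Set.range d) dm)
    (lamm : ℝ)
    (hlam : IsGreatest
      {μ | IsEigenvalue (invSqrtDiag d * (Matrix.diagonal d - A) * invSqrtDiag d) μ} lamm)
    (μ : ℝ)
    (hμ : IsEigenvalue
      (invSqrtDiag (fun i => d i + 1) *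
        (Matrix.diagonal (fun i => d i + 1) - (A + 1)) *
        invSqrtDiag (fun i => d i + 1)) μ) :
    μ ≤ dm / (dm + 1) * lamm := by
  classical
  obtain ⟨i0, hi0⟩ := hdm.1
  have hdm_pos : 0 < dm := hi0 ▸ hdpos i0
  have hdle : ∀ i, d i ≤ dm := fun i => hdm.2 ⟨i, rfl⟩
  -- nonnegativity of the Laplacian quadratic form
  have hquadnn : ∀ y : Fin n → ℝ, 0 ≤ y ⬝ᵥ (Matrix.diagonal d - A) *ᵥ y := by
    intro y
    rw [lap_quadform A hAsymm d hd y]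
    apply div_nonneg _ (by norm_num)
    exact Finset.sum_nonneg fun i _ => Finset.sum_nonneg fun j _ =>
      mul_nonneg (hAnonneg i j) (sq_nonneg _)
  -- moving a diagonal matrix across a dot product
  have diag_dot : ∀ (g u w : Fin n → ℝ),
      w ⬝ᵥ (Matrix.diagonal g *ᵥ u) = (Matrix.diagonal g *ᵥ w) ⬝ᵥ u := by
    intro g u w
    simp only [dotProduct, Matrix.mulVec_diagonal]
    exact Finset.sum_congr rfl fun i _ => by ring
  -- quadratic form of a conjugated matrix
  have conj_quad : ∀ (e : Fin n → ℝ) (M : Matrix (Fin n) (Fin n) ℝ) (w : Fin n → ℝ),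
      w ⬝ᵥ (invSqrtDiag e * M * invSqrtDiag e) *ᵥ w
        = (invSqrtDiag e *ᵥ w) ⬝ᵥ M *ᵥ (invSqrtDiag e *ᵥ w) := by
    intro e M w
    rw [← Matrix.mulVec_mulVec, ← Matrix.mulVec_mulVec, invSqrtDiag, diag_dot]
  -- the normalized Laplacian is Hermitian
  have hA_herm : (Matrix.diagonal d - A).IsHermitian := by
    have h1 : A.IsHermitian := by
      rw [Matrix.IsHermitian, Matrix.conjTranspose_eq_transpose_of_trivial]
      exact hAsymm
    exact (Matrix.isHermitian_diagonal d).sub h1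
  have hLs_herm : (invSqrtDiag d * (Matrix.diagonal d - A) * invSqrtDiag d).IsHermitian := by
    have hB : (invSqrtDiag d).IsHermitian := Matrix.isHermitian_diagonal _
    rw [Matrix.IsHermitian, Matrix.conjTranspose_mul, Matrix.conjTranspose_mul,
      hB.eq, hA_herm.eq, mul_assoc]
  -- lamm is nonnegative
  have hposquad : ∀ v : Fin n → ℝ,
      0 ≤ v ⬝ᵥ (invSqrtDiag d * (Matrix.diagonal d - A) * invSqrtDiag d) *ᵥ v := by
    intro v
    rw [conj_quad]
    exact hquadnn _
  have hlam_nonneg : 0 ≤ lamm := by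
    obtain ⟨v, hvne, hveq⟩ := hlam.1
    have h1 : v ⬝ᵥ (invSqrtDiag d * (Matrix.diagonal d - A) * invSqrtDiag d) *ᵥ v
        = lamm * (v ⬝ᵥ v) := by
      rw [hveq, dotProduct_smul, smul_eq_mul]
    have h2 := hposquad v
    have h3 : 0 ≤ v ⬝ᵥ v := Finset.sum_nonneg fun i _ => mul_self_nonneg _
    have h4 : v ⬝ᵥ v ≠ 0 := fun h => hvne (dotProduct_self_eq_zero.mp h)
    have h5 : 0 < v ⬝ᵥ v := lt_of_le_of_ne h3 (Ne.symm h4)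
    nlinarith [h1, h2, h5]
  -- unpack the eigenvector of the renormalized Laplacian
  obtain ⟨x, hxne, hxeq⟩ := hμ
  set e : Fin n → ℝ := fun i => d i + 1 with he
  have hepos : ∀ i, 0 < e i := fun i => by have := hdpos i; simp [he]; linarith
  set y : Fin n → ℝ := invSqrtDiag e *ᵥ x with hy
  have hDD : Matrix.diagonal e - (A + 1) = Matrix.diagonal d - A := by
    ext i j
    by_cases h : i = j
    · subst h; simp [Matrix.diagonal_apply, Matrix.one_apply, he]
    · simp [Matrix.diagonal_apply, Matrix.one_apply, h]
  have key : μ * (x ⬝ᵥ x) = y ⬝ᵥ (Matrix.diagonal d - A) *ᵥ y := by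
    have h1 : x ⬝ᵥ (invSqrtDiag e * (Matrix.diagonal e - (A + 1)) * invSqrtDiag e) *ᵥ x
        = y ⬝ᵥ (Matrix.diagonal d - A) *ᵥ y := by
      rw [hDD, conj_quad]
    have h2 : x ⬝ᵥ (invSqrtDiag e * (Matrix.diagonal e - (A + 1)) * invSqrtDiag e) *ᵥ x
        = μ * (x ⬝ᵥ x) := by
      rw [hxeq, dotProduct_smul, smul_eq_mul]
    rw [← h1, h2]
  -- relate x and y
  have hx_eq : ∀ i, x i = Real.sqrt (e i) * y i := by
    intro i
    have hs : Real.sqrt (e i) ≠ 0 := ne_of_gt (Real.sqrt_pos.mpr (hepos i))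
    have : y i = (Real.sqrt (e i))⁻¹ * x i := by
      rw [hy]; simp [invSqrtDiag, Matrix.mulVec_diagonal]
    rw [this]
    field_simp
  have hyne : y ≠ 0 := by
    intro h
    apply hxne
    funext i
    rw [hx_eq i, h]
    simp
  set t := ∑ i, d i * y i ^ 2 with ht
  set s := ∑ i, y i ^ 2 with hs
  have hxx : x ⬝ᵥ x = t + s := by
    rw [ht, hs, ← Finset.sum_add_distrib]
    refine Finset.sum_congr rfl fun i _ => ?_
    rw [hx_eq i]
    have h1 : Real.sqrt (e i) * Real.sqrt (e i) = e i :=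
      Real.mul_self_sqrt (hepos i).le
    calc (Real.sqrt (e i) * y i) * (Real.sqrt (e i) * y i)
        = (Real.sqrt (e i) * Real.sqrt (e i)) * y i ^ 2 := by ring
      _ = (d i + 1) * y i ^ 2 := by rw [h1]
      _ = d i * y i ^ 2 + y i ^ 2 := by ring
  have hs_pos : 0 < s := by
    obtain ⟨i, hi⟩ := Function.ne_iff.mp hyne
    refine Finset.sum_pos' (fun j _ => sq_nonneg _) ⟨i, Finset.mem_univ i, ?_⟩
    exact sq_pos_of_ne_zero hi
  have ht_nonneg : 0 ≤ t :=
    Finset.sum_nonneg fun i _ => mul_nonneg (hdpos i).le (sq_nonneg _)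
  have hts : t ≤ dm * s := by
    rw [ht, hs, Finset.mul_sum]
    exact Finset.sum_le_sum fun i _ => mul_le_mul_of_nonneg_right (hdle i) (sq_nonneg _)
  -- Rayleigh bound : q ≤ lamm * t
  set q := y ⬝ᵥ (Matrix.diagonal d - A) *ᵥ y with hq
  have hq_nonneg : 0 ≤ q := hquadnn y
  have hq_le : q ≤ lamm * t := by
    set z : Fin n → ℝ := fun i => Real.sqrt (d i) * y i with hz
    have hzy : invSqrtDiag d *ᵥ z = y := by
      funext i
      have hsd : Real.sqrt (d i) ≠ 0 := ne_of_gt (Real.sqrt_pos.mpr (hdpos i))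
      simp [invSqrtDiag, Matrix.mulVec_diagonal, hz]
      field_simp
    have h1 := rayleigh_bound hLs_herm lamm (fun ν hν => hlam.2 hν) z
    rw [conj_quad, hzy] at h1
    have h2 : z ⬝ᵥ z = t := by
      rw [ht]
      refine Finset.sum_congr rfl fun i _ => ?_
      have hds : Real.sqrt (d i) * Real.sqrt (d i) = d i :=
        Real.mul_self_sqrt (hdpos i).le
      calc (Real.sqrt (d i) * y i) * (Real.sqrt (d i) * y i)
          = (Real.sqrt (d i) * Real.sqrt (d i)) * y i ^ 2 := by ring
        _ = d i * y i ^ 2 := by rw [hds]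
    rw [h2] at h1
    exact h1
  -- final arithmetic
  have heq : μ * (t + s) = q := by rw [← hxx, key, hq]
  have ha : q * dm ≤ lamm * t * dm := mul_le_mul_of_nonneg_right hq_le hdm_pos.le
  have hb : lamm * t ≤ lamm * (dm * s) := mul_le_mul_of_nonneg_left hts hlam_nonneg
  have h1 : q * (dm + 1) ≤ dm * lamm * (t + s) := by nlinarith [ha, hb, hq_le]
  have hts_pos : (0:ℝ) < t + s := by linarith
  rw [div_mul_eq_mul_div, le_div_iff₀ (by linarith : (0:ℝ) < dm + 1)]
  have h2 : μ * (dm + 1) * (t + s) ≤ dm * lamm * (t + s) := by nlinarith [heq, h1]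
  exact le_of_mul_le_mul_right h2 hts_pos
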